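/- Let 0 < ε < 1/4, and let X, Y be compact Hausdorff spaces with X having at least two points. Fix distinct points A, B ∈ X and a point y₀ ∈ Y where a continuous function α : Y → [0, 2√ε] attains the value 2√ε. Suppose T : C(X) → C(Y) is defined by (Tf)(y) := α(y)·(f(A) + f(B))/2 for all f and y (a simplified model of the construction). Then T is ε-disjointness preserving with ‖T‖ = 2√ε, and for every weighted composition map S (Sf = a·(f∘h) with a ∈ C(Y), h continuous on c(a)) one has ‖T − S‖ ≥ √ε. -/
import Mathlib

open Real

def IsWCM {X Y : Type*} [TopologicalSpace X] [CompactSpace X]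
    [TopologicalSpace Y] [CompactSpace Y]
    (S : C(X, ℝ) →L[ℝ] C(Y, ℝ)) : Prop :=
  ∃ (a : C(Y, ℝ)) (h : Y → X), ContinuousOn h {y | a y ≠ 0} ∧
    ∀ (f : C(X, ℝ)) (y : Y), S f y = a y * f (h y)

theorem stmt17 {X Y : Type*}
    [TopologicalSpace X] [CompactSpace X] [T2Space X]
    [TopologicalSpace Y] [CompactSpace Y] [T2Space Y]
    (ε : ℝ) (hε : 0 < ε) (hε' : ε < 1/4)
    (A B : X) (hAB : A ≠ B) (y₀ : Y)
    (α : C(Y, ℝ)) (hα : ∀ y : Y, α y ∈ Set.Icc 0 (2 * sqrt ε))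
    (hα₀ : α y₀ = 2 * sqrt ε)
    (T : C(X, ℝ) →L[ℝ] C(Y, ℝ))
    (hT : ∀ (f : C(X, ℝ)) (y : Y), T f y = α y * (f A + f B) / 2) :
    (∀ f g : C(X, ℝ), ‖f‖ = 1 → ‖g‖ = 1 → f * g = 0 → ‖T f * T g‖ ≤ ε) ∧
    ‖T‖ = 2 * sqrt ε ∧
    ∀ S : C(X, ℝ) →L[ℝ] C(Y, ℝ), IsWCM S → sqrt ε ≤ ‖T - S‖ := by
  have hNX : Nonempty X := ⟨A⟩
  have hsε : (0:ℝ) ≤ sqrt ε := sqrt_nonneg ε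
  have hsq : sqrt ε * sqrt ε = ε := mul_self_sqrt hε.le
  refine ⟨?_, ?_, ?_⟩
  · intro f g hf hg hfg
    rw [ContinuousMap.norm_le _ hε.le]
    intro y
    have hA' : f A * g A = 0 := by simpa using DFunLike.congr_fun hfg A
    have hB' : f B * g B = 0 := by simpa using DFunLike.congr_fun hfg B
    have hfA : |f A| ≤ 1 := by
      have := f.norm_coe_le_norm A; rwa [hf, Real.norm_eq_abs] at this
    have hfB : |f B| ≤ 1 := by
      have := f.norm_coe_le_norm B; rwa [hf, Real.norm_eq_abs] at this
    have hgA : |g A| ≤ 1 := by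
      have := g.norm_coe_le_norm A; rwa [hg, Real.norm_eq_abs] at this
    have hgB : |g B| ≤ 1 := by
      have := g.norm_coe_le_norm B; rwa [hg, Real.norm_eq_abs] at this
    have key : |(f A + f B) * (g A + g B)| ≤ 1 := by
      rcases mul_eq_zero.mp hA' with h | h
      · have : (f A + f B) * (g A + g B) = f B * g A := by
          rcases mul_eq_zero.mp hB' with h2 | h2 <;> rw [h, h2] <;> ring
        rw [this, abs_mul]
        calc |f B| * |g A| ≤ 1 * 1 := by
              apply mul_le_mul hfB hgA (abs_nonneg _) zero_le_one
          _ = 1 := by ring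
      · have : (f A + f B) * (g A + g B) = f A * g B := by
          rcases mul_eq_zero.mp hB' with h2 | h2 <;> rw [h, h2] <;> ring
        rw [this, abs_mul]
        calc |f A| * |g B| ≤ 1 * 1 := by
              apply mul_le_mul hfA hgB (abs_nonneg _) zero_le_one
          _ = 1 := by ring
    have hαy := hα y
    simp only [ContinuousMap.mul_apply, hT, Real.norm_eq_abs]
    have : |α y * (f A + f B) / 2 * (α y * (g A + g B) / 2)|
        = (α y * α y) / 4 * |(f A + f B) * (g A + g B)| := by
      have h4 : α y * (f A + f B) / 2 * (α y * (g A + g B) / 2)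
          = (α y * α y) / 4 * ((f A + f B) * (g A + g B)) := by ring
      rw [h4, abs_mul, abs_of_nonneg (by nlinarith [hαy.1] : (0:ℝ) ≤ α y * α y / 4)]
    rw [this]
    nlinarith [hαy.1, hαy.2, abs_nonneg ((f A + f B) * (g A + g B))]
  · refine le_antisymm ?_ ?_
    · refine T.opNorm_le_bound (by positivity) fun f => ?_
      rw [ContinuousMap.norm_le _ (by positivity)]
      intro y
      have hαy := hα y
      have hfA : |f A| ≤ ‖f‖ := by
        have := f.norm_coe_le_norm A; rwa [Real.norm_eq_abs] at this
      have hfB : |f B| ≤ ‖f‖ := by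
        have := f.norm_coe_le_norm B; rwa [Real.norm_eq_abs] at this
      rw [hT, Real.norm_eq_abs]
      have := abs_add_le (f A) (f B)
      rw [abs_div, abs_mul, abs_of_nonneg hαy.1]
      have h1 : α y * |f A + f B| ≤ 2 * sqrt ε * (2 * ‖f‖) := by
        apply mul_le_mul hαy.2 (by linarith) (abs_nonneg _) (by positivity)
      rw [abs_of_nonneg (by norm_num : (0:ℝ) ≤ (2:ℝ))]
      linarith
    · have h1 : ‖(1 : C(X, ℝ))‖ = 1 := norm_one
      have h2 : |T 1 y₀| ≤ ‖T 1‖ := by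
        have := (T 1).norm_coe_le_norm y₀; rwa [Real.norm_eq_abs] at this
      have h3 : ‖T 1‖ ≤ ‖T‖ * ‖(1 : C(X, ℝ))‖ := T.le_opNorm 1
      have h4 : T 1 y₀ = 2 * sqrt ε := by
        rw [hT, hα₀]; simp; ring
      rw [h4] at h2
      rw [h1, mul_one] at h3
      calc 2 * sqrt ε = |2 * sqrt ε| := (abs_of_nonneg (by positivity)).symm
        _ ≤ ‖T 1‖ := h2
        _ ≤ ‖T‖ := h3
  · rintro S ⟨a, h, hcont, hS⟩
    set x₀ := h y₀ with hx₀
    -- pick the point among A, B different from x₀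
    have : ∃ P : X, P ≠ x₀ ∧ (P = A ∨ P = B) := by
      by_cases hA : x₀ = A
      · exact ⟨B, by rw [hA]; exact fun e => hAB e.symm, Or.inr rfl⟩
      · exact ⟨A, fun e => hA e.symm, Or.inl rfl⟩
    obtain ⟨P, hPx, hPAB⟩ := this
    obtain ⟨f, hf0, hf1, hfIcc⟩ := exists_continuous_zero_one_of_isClosed
      (isClosed_singleton (x := x₀)) (isClosed_singleton (x := P))
      (by simpa [Set.disjoint_singleton] using fun e => hPx e.symm)
    have hfx₀ : f x₀ = 0 := hf0 rfl
    have hfP : f P = 1 := hf1 rfl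
    have hfnorm : ‖f‖ ≤ 1 := by
      rw [ContinuousMap.norm_le _ zero_le_one]
      intro x
      rw [Real.norm_eq_abs, abs_le]
      exact ⟨by linarith [(hfIcc x).1], (hfIcc x).2⟩
    have hfA0 : 0 ≤ f A := (hfIcc A).1
    have hfB0 : 0 ≤ f B := (hfIcc B).1
    have hsum : 1 ≤ f A + f B := by
      rcases hPAB with rfl | rfl
      · rw [hfP] at *; linarith
      · rw [hfP] at *; linarith
    have hval : ((T - S) f) y₀ = sqrt ε * (f A + f B) := by
      have : (T - S) f = T f - S f := by simp
      rw [this]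
      simp only [ContinuousMap.sub_apply]
      rw [hT, hS, ← hx₀, hfx₀, hα₀]
      ring
    have h2 : |((T - S) f) y₀| ≤ ‖(T - S) f‖ := by
      have := ((T - S) f).norm_coe_le_norm y₀; rwa [Real.norm_eq_abs] at this
    have h3 : ‖(T - S) f‖ ≤ ‖T - S‖ * ‖f‖ := (T - S).le_opNorm f
    have h4 : ‖T - S‖ * ‖f‖ ≤ ‖T - S‖ * 1 :=
      mul_le_mul_of_nonneg_left hfnorm (norm_nonneg (T - S))
    calc sqrt ε = sqrt ε * 1 := by ring
      _ ≤ sqrt ε * (f A + f B) := by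
          apply mul_le_mul_of_nonneg_left hsum hsε
      _ = |((T - S) f) y₀| := by
          rw [hval, abs_of_nonneg (by positivity)]
      _ ≤ ‖(T - S) f‖ := h2
      _ ≤ ‖T - S‖ * 1 := le_trans h3 h4
      _ = ‖T - S‖ := by ring
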